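/- For every positive integer n and t ≠ 0, the n-th derivative of e^{1/t} is (-1)^n (e^{1/t}/t^{2n}) Σ_{k=0}^{n-1} L(n, n-k) t^k, where L(n,k) = C(n-1,k-1) n!/k! are the Lah numbers. -/

import Mathlib

open Nat

/-- The (unsigned) Lah numbers `L(n,k) = C(n-1,k-1) · n!/k!`. -/
noncomputable def lahNumber (n k : ℕ) : ℝ := ((n - 1).choose (k - 1)) * (n ! : ℝ) / k !

lemma lah_rec2 (p j : ℕ) (h : j + 1 ≤ p) :
    lahNumber (p+2) (j+2) = lahNumber (p+1) (j+1) + ((p:ℝ)+j+3) * lahNumber (p+1) (j+2) := by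
  obtain ⟨d, rfl⟩ : ∃ d, p = j + 1 + d := ⟨p - (j+1), by omega⟩
  have h2R : ((j+1+d).choose (j+1) : ℝ) * (j+1) = (j+1+d).choose j * (d+1) := by
    have := Nat.choose_succ_right_eq (j+1+d) j
    rw [show j+1+d - j = d+1 by omega] at this
    exact_mod_cast this
  have keyR : (((j+1+d)+1).choose (j+1) : ℝ) * ((j:ℝ)+1+d+2)
      = ((j:ℝ)+2) * (j+1+d).choose j + ((j:ℝ)+1+d+(j:ℝ)+3) * (j+1+d).choose (j+1) := by
    rw [show (((j+1+d)+1).choose (j+1) : ℝ) = (j+1+d).choose j + (j+1+d).choose (j+1) from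
      by exact_mod_cast Nat.choose_succ_succ (j+1+d) j]
    linear_combination -h2R
  simp only [lahNumber, Nat.add_sub_cancel, show j+1+d+2-1 = j+1+d+1 by omega,
    show j+2-1 = j+1 by omega]
  have nz1 : ((j+1)! : ℝ) ≠ 0 := by exact_mod_cast (Nat.factorial_ne_zero _)
  have nzD : ((j+2)! : ℝ) ≠ 0 := by exact_mod_cast (Nat.factorial_ne_zero _)
  have f1 : ((j+1+d+2)! : ℝ) = ((j:ℝ)+1+d+2) * (j+1+d+1)! := by
    rw [show j+1+d+2 = (j+1+d+1)+1 by ring, Nat.factorial_succ]; push_cast; ring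
  have f2 : ((j+2)! : ℝ) = ((j:ℝ)+2) * (j+1)! := by
    rw [show j+2 = (j+1)+1 from rfl, Nat.factorial_succ]; push_cast; ring
  rw [f1]
  rw [show (((j+1+d).choose j : ℝ) * ((j+1+d+1)! : ℝ)) / ((j+1)! : ℝ)
      = (((j+1+d).choose j : ℝ) * ((j+1+d+1)! : ℝ) * ((j:ℝ)+2)) / ((j+2)! : ℝ) from by
    rw [f2]; field_simp]
  rw [← mul_div_assoc, ← add_div]
  rw [div_eq_div_iff nzD nzD]
  push_cast
  linear_combination keyR * ((j+1+d+1)! : ℝ) * ((j+2)! : ℝ)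

lemma lah_diag (m : ℕ) : lahNumber (m+1) (m+1) = 1 := by
  simp [lahNumber, Nat.add_sub_cancel, div_self, Nat.cast_ne_zero.mpr (Nat.factorial_ne_zero (m+1))]

lemma lah_one (m : ℕ) : lahNumber (m+1) 1 = ((m+1)! : ℝ) := by
  simp [lahNumber]

lemma poly_id (p : ℕ) (t : ℝ) :
    ∑ k ∈ Finset.range (p+2), lahNumber (p+2) (p+2-k) * t^k
      = ∑ k ∈ Finset.range (p+1), lahNumber (p+1) (p+1-k) * t^k
        + ∑ k ∈ Finset.range (p+1), (2*(p:ℝ)+2-k) * lahNumber (p+1) (p+1-k) * t^(k+1) := by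
  have L1 : ∑ k ∈ Finset.range (p+2), lahNumber (p+2) (p+2-k) * t^k
      = (∑ k ∈ Finset.range p, lahNumber (p+2) (p+1-k) * t^(k+1))
        + lahNumber (p+2) 1 * t^(p+1) + 1 := by
    rw [Finset.sum_range_succ' (fun k => lahNumber (p+2) (p+2-k) * t^k) (p+1)]
    rw [Finset.sum_range_succ]
    have e0 : p + 2 - 0 = (p+1)+1 := by omega
    rw [e0, lah_diag (p+1)]
    have : ∀ k ∈ Finset.range p, lahNumber (p+2) (p+2-(k+1)) * t^(k+1)
        = lahNumber (p+2) (p+1-k) * t^(k+1) := by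
      intro k hk; rw [show p+2-(k+1) = p+1-k by omega]
    rw [Finset.sum_congr rfl this, show p+2-(p+1) = 1 by omega]
    ring
  have R1 : ∑ k ∈ Finset.range (p+1), lahNumber (p+1) (p+1-k) * t^k
      = (∑ k ∈ Finset.range p, lahNumber (p+1) (p-k) * t^(k+1)) + 1 := by
    rw [Finset.sum_range_succ' (fun k => lahNumber (p+1) (p+1-k) * t^k) p]
    rcases Nat.eq_zero_or_pos p with hp | hp
    · subst hp; simp [lah_diag 0]
    obtain ⟨q, rfl⟩ : ∃ q, p = q + 1 := ⟨p - 1, by omega⟩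
    rw [show q+1+1-0 = (q+1)+1 by omega, lah_diag (q+1)]
    have : ∀ k ∈ Finset.range (q+1), lahNumber (q+2) (q+1+1-(k+1)) * t^(k+1)
        = lahNumber (q+2) (q+1-k) * t^(k+1) := by
      intro k hk; rw [show q+1+1-(k+1) = q+1-k by omega]
    rw [Finset.sum_congr rfl this]
    ring
  have R2 : ∑ k ∈ Finset.range (p+1), (2*(p:ℝ)+2-k) * lahNumber (p+1) (p+1-k) * t^(k+1)
      = (∑ k ∈ Finset.range p, (2*(p:ℝ)+2-k) * lahNumber (p+1) (p+1-k) * t^(k+1))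
        + ((p:ℝ)+2) * lahNumber (p+1) 1 * t^(p+1) := by
    rw [Finset.sum_range_succ, show p+1-p = 1 by omega]
    ring
  rw [L1, R1, R2]
  have hbound : lahNumber (p+2) 1 = ((p:ℝ)+2) * lahNumber (p+1) 1 := by
    rw [lah_one, lah_one, show p+2 = (p+1)+1 from rfl, Nat.factorial_succ]
    push_cast; ring
  have hcore : ∑ k ∈ Finset.range p, lahNumber (p+2) (p+1-k) * t^(k+1)
      = ∑ k ∈ Finset.range p,
          (lahNumber (p+1) (p-k) + (2*(p:ℝ)+2-k) * lahNumber (p+1) (p+1-k)) * t^(k+1) := by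
    refine Finset.sum_congr rfl fun k hk => ?_
    have hk' : k < p := Finset.mem_range.mp hk
    obtain ⟨d, hd⟩ : ∃ d, p = k + (d + 1) := ⟨p - k - 1, by omega⟩
    have e1 : p + 1 - k = d + 2 := by omega
    have e2 : p - k = d + 1 := by omega
    have e3 : (2*(p:ℝ)+2-(k:ℝ)) = (p:ℝ) + d + 3 := by
      have : (p:ℝ) = (k:ℝ) + ((d:ℝ) + 1) := by exact_mod_cast congrArg (Nat.cast : ℕ → ℝ) hd
      linarith
    rw [e1, e2, e3, lah_rec2 p d (by omega)]
  rw [hcore, hbound]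
  simp only [add_mul]; rw [Finset.sum_add_distrib]; ring

lemma hasDerivAt_D (m : ℕ) (t : ℝ) (ht : t ≠ 0) :
    HasDerivAt (fun s : ℝ => (-1:ℝ)^(m+1) * (Real.exp (1/s) / s^(2*(m+1)))
        * ∑ k ∈ Finset.range (m+1), lahNumber (m+1) (m+1-k) * s^k)
      ((-1:ℝ)^(m+2) * (Real.exp (1/t) / t^(2*(m+2)))
        * ∑ k ∈ Finset.range (m+2), lahNumber (m+2) (m+2-k) * t^k) t := by
  have hinv : HasDerivAt (fun s : ℝ => 1/s) (-(t^2)⁻¹) t := by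
    simpa [one_div] using hasDerivAt_inv ht
  have hexp : HasDerivAt (fun s : ℝ => Real.exp (1/s)) (Real.exp (1/t) * -(t^2)⁻¹) t := hinv.exp
  have hT : HasDerivAt (fun s : ℝ => s^(2*(m+1))) ((2*(m+1) : ℕ) * t^(2*(m+1)-1)) t :=
    hasDerivAt_pow _ t
  have hdiv := hexp.div hT (pow_ne_zero _ ht)
  have hP : HasDerivAt (fun s : ℝ => ∑ k ∈ Finset.range (m+1), lahNumber (m+1) (m+1-k) * s^k)
      (∑ k ∈ Finset.range (m+1), lahNumber (m+1) (m+1-k) * ((k:ℝ) * t^(k-1))) t :=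
    HasDerivAt.fun_sum (fun k _ => (hasDerivAt_pow k t).const_mul _)
  have h := (hdiv.const_mul ((-1:ℝ)^(m+1))).mul hP
  refine h.congr_deriv ?_
  simp only [Pi.div_apply]
  set E := Real.exp (1/t) with hE
  set S := ∑ k ∈ Finset.range (m+1), lahNumber (m+1) (m+1-k) * t^k with hS
  set S' := ∑ k ∈ Finset.range (m+1), lahNumber (m+1) (m+1-k) * ((k:ℝ) * t^(k-1)) with hS'
  have hB : t^2 * S' = ∑ k ∈ Finset.range (m+1), (k:ℝ) * lahNumber (m+1) (m+1-k) * t^(k+1) := by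
    rw [hS', Finset.mul_sum]
    refine Finset.sum_congr rfl fun k _ => ?_
    cases k with
    | zero => simp
    | succ j => rw [show j+1-1 = j from rfl]; push_cast; ring
  have hsum2 : ∑ k ∈ Finset.range (m+1), (2*(m:ℝ)+2-k) * lahNumber (m+1) (m+1-k) * t^(k+1)
      = 2*((m:ℝ)+1)*t*S - t^2*S' := by
    rw [hB, hS, Finset.mul_sum, ← Finset.sum_sub_distrib]
    refine Finset.sum_congr rfl fun k _ => ?_
    ring
  have hP2 : ∑ k ∈ Finset.range (m+2), lahNumber (m+2) (m+2-k) * t^k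
      = S + (2*((m:ℝ)+1)*t*S - t^2*S') := by
    rw [poly_id m t, hsum2, hS]
  rw [hP2]
  have e1 : 2*(m+1)-1 = 2*m+1 := by omega
  rw [e1]
  have hne : (t:ℝ)^(2*m) ≠ 0 := pow_ne_zero _ ht
  push_cast
  field_simp
  ring

theorem iteratedDeriv_exp_inv (n : ℕ) (hn : 1 ≤ n) (t : ℝ) (ht : t ≠ 0) :
    iteratedDeriv n (fun s : ℝ => Real.exp (1 / s)) t
      = (-1) ^ n * (Real.exp (1 / t) / t ^ (2 * n))
          * ∑ k ∈ Finset.range n, lahNumber n (n - k) * t ^ k := by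
  induction n, hn using Nat.le_induction generalizing t with
  | base =>
    rw [iteratedDeriv_one]
    have hinv : HasDerivAt (fun s : ℝ => 1/s) (-(t^2)⁻¹) t := by
      simpa [one_div] using hasDerivAt_inv ht
    have hexp : HasDerivAt (fun s : ℝ => Real.exp (1/s)) (Real.exp (1/t) * -(t^2)⁻¹) t := hinv.exp
    rw [hexp.deriv]
    simp only [Finset.sum_range_one, pow_zero, Nat.sub_zero]
    have : lahNumber 1 1 = 1 := lah_diag 0
    rw [this]
    field_simp
  | succ n hn ih =>
    rw [iteratedDeriv_succ]
    have hev : iteratedDeriv n (fun s : ℝ => Real.exp (1 / s))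
        =ᶠ[nhds t] (fun s : ℝ => (-1:ℝ)^n * (Real.exp (1/s) / s^(2*n))
          * ∑ k ∈ Finset.range n, lahNumber n (n-k) * s^k) := by
      filter_upwards [compl_singleton_mem_nhds ht] with s hs
      exact ih s hs
    rw [hev.deriv_eq]
    obtain ⟨m, rfl⟩ : ∃ m, n = m + 1 := ⟨n - 1, by omega⟩
    exact (hasDerivAt_D m t ht).deriv
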